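/- Let R be a Dedekind domain with fraction field K, V a K-vector space, (v, 𝔞) a pseudo-element (v ∈ V, 𝔞 a fractional ideal of R), and (v_i, 𝔞_i) for 1 ≤ i ≤ l pseudo-elements of V. If 𝔞v ⊆ Σ_i 𝔞_i v_i then there exist a_i ∈ 𝔞_i 𝔞⁻¹ such that v = Σ_i a_i v_i. -/

import Mathlib

/-- Let `R` be a Dedekind domain with fraction field `K`, `V` a `K`-vector
space, `(v, 𝔞)` a pseudo-element and `(vᵢ, 𝔞ᵢ)` pseudo-elements of `V`. If
`𝔞 v ⊆ ∑ᵢ 𝔞ᵢ vᵢ` then there exist `aᵢ ∈ 𝔞ᵢ 𝔞⁻¹` with `v = ∑ᵢ aᵢ vᵢ`. -/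
theorem stmt0 {R : Type*} [CommRing R] [IsDomain R] [IsDedekindDomain R]
    {V : Type*} [AddCommGroup V] [Module (FractionRing R) V]
    [Module R V] [IsScalarTower R (FractionRing R) V]
    (l : ℕ) (v : V)
    (𝔞 : FractionalIdeal (nonZeroDivisors R) (FractionRing R))
    (vi : Fin l → V)
    (𝔞i : Fin l → FractionalIdeal (nonZeroDivisors R) (FractionRing R))
    (h𝔞 : 𝔞 ≠ 0) (h𝔞i : ∀ i, 𝔞i i ≠ 0)
    (h : ∀ a ∈ 𝔞, a • v ∈
      Submodule.span R (⋃ i, {x : V | ∃ c ∈ 𝔞i i, x = c • vi i})) :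
    ∃ a : Fin l → FractionRing R,
      (∀ i, a i ∈ 𝔞i i * 𝔞⁻¹) ∧ v = ∑ i, a i • vi i := by
  have addm : ∀ (I : FractionalIdeal (nonZeroDivisors R) (FractionRing R))
      (x y : FractionRing R), x ∈ I → y ∈ I → x + y ∈ I := fun I x y hx hy =>
    FractionalIdeal.mem_coe.1
      (add_mem (FractionalIdeal.mem_coe.2 hx) (FractionalIdeal.mem_coe.2 hy))
  have zerom : ∀ I : FractionalIdeal (nonZeroDivisors R) (FractionRing R),
      (0 : FractionRing R) ∈ I := fun I => FractionalIdeal.mem_coe.1 (zero_mem _)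
  have span_rep : ∀ w ∈ Submodule.span R (⋃ i, {x : V | ∃ c ∈ 𝔞i i, x = c • vi i}),
      ∃ c : Fin l → FractionRing R,
      (∀ i, c i ∈ 𝔞i i) ∧ w = ∑ i, c i • vi i := by
    intro w hw
    induction hw using Submodule.span_induction with
    | mem x hx =>
      rw [Set.mem_iUnion] at hx
      obtain ⟨i, c, hc, rfl⟩ := hx
      refine ⟨fun j => if j = i then c else 0, ?_, ?_⟩
      · intro j
        by_cases hj : j = i <;> simp [hj, hc, zerom]
      · simp
    | zero => exact ⟨0, fun i => zerom _, by simp⟩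
    | add x y _ _ hx hy =>
      obtain ⟨c, hc, hcx⟩ := hx
      obtain ⟨d, hd, hdy⟩ := hy
      exact ⟨c + d, fun i => addm _ _ _ (hc i) (hd i),
        by simp [add_smul, hcx, hdy, Finset.sum_add_distrib]⟩
    | smul r x _ hx =>
      obtain ⟨c, hc, hcx⟩ := hx
      refine ⟨r • c, fun i => ?_, ?_⟩
      · exact FractionalIdeal.mem_coe.1
          (Submodule.smul_mem _ r (FractionalIdeal.mem_coe.2 (hc i)))
      · simp [hcx, Finset.smul_sum, smul_assoc]
  have key : ∀ α ∈ 𝔞, ∃ c : Fin l → FractionRing R,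
      (∀ i, c i ∈ 𝔞i i) ∧ α • v = ∑ i, c i • vi i :=
    fun α hα => span_rep _ (h α hα)
  have h1 : (1 : FractionRing R) ∈ 𝔞 * 𝔞⁻¹ := by
    rw [mul_inv_cancel₀ h𝔞]
    exact FractionalIdeal.one_mem_one _
  have main : ∀ x ∈ (↑(𝔞 * 𝔞⁻¹) : Submodule R (FractionRing R)),
      ∃ a : Fin l → FractionRing R,
        (∀ i, a i ∈ 𝔞i i * 𝔞⁻¹) ∧ x • v = ∑ i, a i • vi i := by
    intro x hx
    rw [FractionalIdeal.coe_mul] at hx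
    refine Submodule.mul_induction_on hx ?_ ?_
    · intro α hα β hβ
      obtain ⟨c, hc, hcv⟩ := key α (FractionalIdeal.mem_coe.1 hα)
      refine ⟨fun i => c i * β, fun i =>
        FractionalIdeal.mul_mem_mul (hc i) (FractionalIdeal.mem_coe.1 hβ), ?_⟩
      rw [mul_comm, mul_smul, hcv, Finset.smul_sum]
      refine Finset.sum_congr rfl fun i _ => ?_
      show β • c i • vi i = (c i * β) • vi i
      rw [mul_comm, mul_smul]
    · rintro x y ⟨a, ha, hax⟩ ⟨b, hb, hby⟩
      exact ⟨a + b, fun i => addm _ _ _ (ha i) (hb i),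
        by simp [add_smul, hax, hby, Finset.sum_add_distrib]⟩
  obtain ⟨a, ha, hav⟩ := main 1 (FractionalIdeal.mem_coe.2 h1)
  exact ⟨a, ha, by simpa using hav⟩
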